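/- Let F : C → Vect_k^f be a k-linear functor with all F(X) finite-dimensional. Then End(F) ≅ Coend(F)* as k-algebras, where Coend(F)* carries the convolution algebra structure dual to the coalgebra structure of Coend(F). Concretely, if {i_X : Hom_k(F(X),F(X)) → Coend(F)} is a realization of Coend(F), then the maps π_X : Coend(F)* → Hom_k(F(X),F(X)) defined by π_X(α) := Σ_{i,j} α(i_X(x^i ⊗ x_j)) (x^j ⊗ x_i) (for a basis {x_i} of F(X) with dual basis {x^i}) make Coend(F)* a realization of End(F), and each π_X is an algebra map. -/

import Mathlib

/- STATEMENT 8: End(F) ≅ Coend(F)* as k-algebras.  Concretely, for a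
realization {i_X} of Coend(F) with its induced coalgebra structure (Δ, ε),
the maps π_X(α) = Σ_{p,q} α(i_X(x^p ⊗ x_q)) (x^q ⊗ x_p) make the dual space
Coend(F)* (with the convolution product) a realization of End(F), and each
π_X is an algebra map (multiplicative and unital) from the convolution algebra
to End_k(F X). -/

open CategoryTheory TensorProduct
set_option linter.unusedSectionVars false

noncomputable section

namespace Aux
variable {k : Type} [Field k]
variable {M N : Type*} [AddCommGroup M] [Module k M] [AddCommGroup N] [Module k N]

lemma comp_smulRight (S : M →ₗ[k] N) (f : M →ₗ[k] k) (x : M) :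
    S ∘ₗ f.smulRight x = f.smulRight (S x) := by
  ext y; simp

lemma trace_smulRight' [Module.Finite k M] (f : M →ₗ[k] k) (x : M) :
    LinearMap.trace k M (f.smulRight x) = f x := by
  have h : f.smulRight x = dualTensorHom k M M (f ⊗ₜ x) := by ext y; simp
  rw [h, LinearMap.trace_eq_contract_apply, contractLeft_apply]

variable {ι : Type*} [Fintype ι]

lemma basis_expand (b : Module.Basis ι k M) (S : M →ₗ[k] M) :
    ∑ p, ∑ q, b.coord p (S (b q)) • (b.coord q).smulRight (b p) = S := by
  classical
  apply b.ext; intro r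
  simp only [LinearMap.sum_apply, LinearMap.smul_apply, LinearMap.smulRight_apply,
    Module.Basis.coord_apply, Module.Basis.repr_self]
  rw [Finset.sum_comm]
  simp [Finsupp.single_apply, Finset.sum_ite_eq', smul_smul]

lemma smulRight_expand (b : Module.Basis ι k M) (f : M →ₗ[k] k) (x : M) :
    f.smulRight x = ∑ r, b.coord r x • f.smulRight (b r) := by
  ext y
  simp only [LinearMap.smulRight_apply, LinearMap.sum_apply, LinearMap.smul_apply,
    Module.Basis.coord_apply]
  calc f y • x = f y • ∑ r, b.repr x r • b r := by rw [b.sum_repr]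
    _ = ∑ r, b.repr x r • f y • b r := by
        rw [Finset.smul_sum]
        exact Finset.sum_congr rfl fun r _ => smul_comm _ _ _

lemma trace_nondeg [Module.Finite k M] [Module.Finite k N] (T : M →ₗ[k] N)
    (h : ∀ S : N →ₗ[k] M, LinearMap.trace k M (S ∘ₗ T) = 0) : T = 0 := by
  classical
  set bM := Module.Free.chooseBasis k M
  set bN := Module.Free.chooseBasis k N
  apply bM.ext; intro j
  refine bN.ext_elem fun l => ?_
  have := h ((bN.coord l).smulRight (bM j))
  have h2 : (bN.coord l).smulRight (bM j) ∘ₗ T = ((bN.coord l) ∘ₗ T).smulRight (bM j) := by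
    ext y; simp
  rw [h2, trace_smulRight'] at this
  simpa using this

lemma trace_ext [Module.Finite k M] [Module.Finite k N] (T₁ T₂ : M →ₗ[k] N)
    (h : ∀ S : N →ₗ[k] M, LinearMap.trace k M (S ∘ₗ T₁) = LinearMap.trace k M (S ∘ₗ T₂)) :
    T₁ = T₂ := by
  have := trace_nondeg (T₁ - T₂) (fun S => by
    rw [LinearMap.comp_sub, map_sub, h, sub_self])
  exact sub_eq_zero.mp this

lemma key_trace_aux [Module.Finite k M] (b : Module.Basis ι k M)
    {U : Type*} [AddCommGroup U] [Module k U]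
    (i : (M →ₗ[k] M) →ₗ[k] U) (α : U →ₗ[k] k) (S : M →ₗ[k] M) :
    LinearMap.trace k M (S ∘ₗ
      ∑ p, ∑ q, α (i ((b.coord p).smulRight (b q))) • (b.coord q).smulRight (b p))
      = α (i S) := by
  classical
  conv_rhs => rw [← basis_expand b S]
  have hL : S ∘ₗ (∑ p, ∑ q, α (i ((b.coord p).smulRight (b q))) • (b.coord q).smulRight (b p))
      = ∑ p, ∑ q, α (i ((b.coord p).smulRight (b q))) • (S ∘ₗ (b.coord q).smulRight (b p)) := by
    ext y; simp
  rw [hL]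
  simp only [map_sum, map_smul, comp_smulRight, trace_smulRight', smul_eq_mul]
  rw [Finset.sum_comm]
  exact Finset.sum_congr rfl fun p _ => Finset.sum_congr rfl fun q _ => by
    rw [mul_comm]

lemma smulRight_expand_left (b : Module.Basis ι k M) (g : M →ₗ[k] k) (x : M) :
    g.smulRight x = ∑ q, g (b q) • ((b.coord q).smulRight x) := by
  ext y
  simp only [LinearMap.smulRight_apply, LinearMap.sum_apply, LinearMap.smul_apply,
    Module.Basis.coord_apply, smul_smul]
  rw [← Finset.sum_smul]
  congr 1
  conv_lhs => rw [← b.sum_repr y]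
  rw [map_sum]
  simp [mul_comm]


end Aux

universe w₁ w₂ u
variable (k : Type) [Field k]

def smulRightL {M : Type} [AddCommGroup M] [Module k M] (x : M) :
    (M →ₗ[k] k) →ₗ[k] (M →ₗ[k] M) where
  toFun f := f.smulRight x
  map_add' f g := by ext y; simp [add_smul]
  map_smul' c f := by ext y; simp [smul_smul]

/-- The comatrix comultiplication on `Hom_k(M,M)` for finite-dimensional `M`:
`Δ(β ⊗ x) = Σ_i (β ⊗ x_i) ⊗ (x^i ⊗ x)`.  The corresponding counit is the
trace. -/
def comatrixComul (M : Type) [AddCommGroup M] [Module k M] [Module.Finite k M] :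
    (M →ₗ[k] M) →ₗ[k] ((M →ₗ[k] M) ⊗[k] (M →ₗ[k] M)) :=
  let b := Module.Free.chooseBasis k M
  ∑ i, ∑ l,
    ((TensorProduct.mk k (M →ₗ[k] M) (M →ₗ[k] M)).flip ((b.coord l).smulRight (b i))) ∘ₗ
      (smulRightL k (b l)) ∘ₗ (LinearMap.llcomp k M M k (b.coord i))

variable (C : Type u) [SmallCategory C] [Preadditive C] [CategoryTheory.Linear k C] [Abelian C]
variable (F : C ⥤ ModuleCat k) [F.Additive] [F.Linear k]

/-- Dinaturality of a family of maps `Hom_k(F X, F X) → U`. -/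
def DinatC (U : Type w₁) [AddCommGroup U] [Module k U]
    (i : ∀ X : C, (F.obj X →ₗ[k] F.obj X) →ₗ[k] U) : Prop :=
  ∀ (X Y : C) (f : Y ⟶ X) (S : F.obj X →ₗ[k] F.obj Y),
    i X (((F.map f).hom : F.obj Y →ₗ[k] F.obj X) ∘ₗ S)
      = i Y (S ∘ₗ ((F.map f).hom : F.obj Y →ₗ[k] F.obj X))

/-- `(U, i)` is a realization of `Coend(F)`: a dinatural family which is
initial among all such. -/
def IsCoendRealization (U : Type w₁) [AddCommGroup U] [Module k U]
    (i : ∀ X : C, (F.obj X →ₗ[k] F.obj X) →ₗ[k] U) : Prop :=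
  DinatC k C F U i ∧
  ∀ (V : Type w₂) [AddCommGroup V] [Module k V]
    (j : ∀ X : C, (F.obj X →ₗ[k] F.obj X) →ₗ[k] V), DinatC k C F V j →
    ∃! φ : U →ₗ[k] V, ∀ X : C, φ ∘ₗ i X = j X

/-- The wedge condition for a candidate end. -/
def DinatEnd (U : Type w₁) [AddCommGroup U] [Module k U]
    (π : ∀ X : C, U →ₗ[k] (F.obj X →ₗ[k] F.obj X)) : Prop :=
  ∀ (X Y : C) (f : X ⟶ Y) (u : U),
    ((F.map f).hom : F.obj X →ₗ[k] F.obj Y) ∘ₗ π X u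
      = (π Y u) ∘ₗ ((F.map f).hom : F.obj X →ₗ[k] F.obj Y)

/-- `(U, π)` is a realization of the end `End(F)`. -/
def IsEndRealization (U : Type w₁) [AddCommGroup U] [Module k U]
    (π : ∀ X : C, U →ₗ[k] (F.obj X →ₗ[k] F.obj X)) : Prop :=
  DinatEnd k C F U π ∧
  ∀ (V : Type w₂) [AddCommGroup V] [Module k V]
    (p : ∀ X : C, V →ₗ[k] (F.obj X →ₗ[k] F.obj X)), DinatEnd k C F V p →
    ∃! φ : V →ₗ[k] U, ∀ X : C, π X ∘ₗ φ = p X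

/-- The maps `π_X : Coend(F)* → Hom_k(F X, F X)`,
`π_X(α) = Σ_{p,q} α(i_X(x^p ⊗ x_q)) (x^q ⊗ x_p)`. -/
def coendDualπ (U : Type) [AddCommGroup U] [Module k U]
    (i : ∀ X : C, (F.obj X →ₗ[k] F.obj X) →ₗ[k] U)
    (X : C) [Module.Finite k (F.obj X)] :
    (U →ₗ[k] k) →ₗ[k] (F.obj X →ₗ[k] F.obj X) :=
  let b := Module.Free.chooseBasis k (F.obj X)
  ∑ p, ∑ q,
    (LinearMap.applyₗ (i X ((b.coord p).smulRight (b q))) :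
        (U →ₗ[k] k) →ₗ[k] k).smulRight ((b.coord q).smulRight (b p))

/-- The convolution product on the dual of `U` relative to a comultiplication
`Δ : U → U ⊗ U`. -/
def convMul (U : Type) [AddCommGroup U] [Module k U]
    (Δ : U →ₗ[k] U ⊗[k] U) (α β : U →ₗ[k] k) : U →ₗ[k] k :=
  (TensorProduct.lid k k).toLinearMap ∘ₗ (TensorProduct.map α β) ∘ₗ Δ


open Aux in
lemma comatrixComul_apply (M : Type) [AddCommGroup M] [Module k M] [Module.Finite k M]
    (S : M →ₗ[k] M) :
    comatrixComul k M S =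
      ∑ r, ∑ l, ((((Module.Free.chooseBasis k M).coord r) ∘ₗ S).smulRight
          (Module.Free.chooseBasis k M l)) ⊗ₜ[k]
        (((Module.Free.chooseBasis k M).coord l).smulRight (Module.Free.chooseBasis k M r)) := by
  simp [comatrixComul, smulRightL, LinearMap.sum_apply, LinearMap.llcomp_apply]
  rfl

open Aux in
lemma coendDualπ_apply (U : Type) [AddCommGroup U] [Module k U]
    (i : ∀ X : C, (F.obj X →ₗ[k] F.obj X) →ₗ[k] U)
    (X : C) [Module.Finite k (F.obj X)] (α : U →ₗ[k] k) :
    coendDualπ k C F U i X α =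
      ∑ p, ∑ q, α (i X (((Module.Free.chooseBasis k (F.obj X)).coord p).smulRight
          (Module.Free.chooseBasis k (F.obj X) q))) •
        (((Module.Free.chooseBasis k (F.obj X)).coord q).smulRight
          (Module.Free.chooseBasis k (F.obj X) p)) := by
  simp [coendDualπ, LinearMap.sum_apply]

open Aux in
lemma coendDualπ_trace (U : Type) [AddCommGroup U] [Module k U]
    (i : ∀ X : C, (F.obj X →ₗ[k] F.obj X) →ₗ[k] U)
    (X : C) [Module.Finite k (F.obj X)] (α : U →ₗ[k] k) (S : F.obj X →ₗ[k] F.obj X) :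
    LinearMap.trace k (F.obj X) (S ∘ₗ coendDualπ k C F U i X α) = α (i X S) := by
  have h := coendDualπ_apply k C F U i X α
  simp only [h]
  exact key_trace_aux (k := k) (M := ↥(F.obj X)) (Module.Free.chooseBasis k (F.obj X)) (i X) α S

set_option maxHeartbeats 2000000 in
theorem end_iso_dual_of_coend
    (hfd : ∀ X : C, FiniteDimensional k (F.obj X))
    (U : Type) [AddCommGroup U] [Module k U]
    (i : ∀ X : C, (F.obj X →ₗ[k] F.obj X) →ₗ[k] U)
    (hreal : IsCoendRealization.{0, 0} k C F U i)
    (Δ : U →ₗ[k] U ⊗[k] U) (ε : U →ₗ[k] k)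
    (hΔ : ∀ X : C, haveI := hfd X;
      Δ ∘ₗ i X = (TensorProduct.map (i X) (i X)) ∘ₗ comatrixComul k (F.obj X))
    (hε : ∀ X : C, ε ∘ₗ i X = LinearMap.trace k (F.obj X)) :
    -- Coend(F)* with the maps π_X is a realization of End(F):
    IsEndRealization.{0, 0} k C F (U →ₗ[k] k)
      (fun X : C => haveI := hfd X; coendDualπ k C F U i X) ∧
    -- and each π_X is an algebra map from the convolution algebra Coend(F)*:
    (∀ X : C, haveI := hfd X;
      (∀ α β : U →ₗ[k] k,
        coendDualπ k C F U i X (convMul k U Δ α β)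
          = (coendDualπ k C F U i X α) ∘ₗ (coendDualπ k C F U i X β)) ∧
      coendDualπ k C F U i X ε = LinearMap.id) := by
  classical
  obtain ⟨hdin, huniv⟩ := hreal
  have key : ∀ (X : C) (α : U →ₗ[k] k) (S : F.obj X →ₗ[k] F.obj X),
      haveI := hfd X;
      LinearMap.trace k (F.obj X) (S ∘ₗ coendDualπ k C F U i X α) = α (i X S) :=
    fun X α S => by haveI := hfd X; exact coendDualπ_trace k C F U i X α S
  constructor
  · constructor
    · -- the wedge (dinaturality) condition
      intro X Y f α
      haveI := hfd X; haveI := hfd Y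
      show ((F.map f).hom : F.obj X →ₗ[k] F.obj Y) ∘ₗ coendDualπ k C F U i X α
          = coendDualπ k C F U i Y α ∘ₗ ((F.map f).hom : F.obj X →ₗ[k] F.obj Y)
      apply Aux.trace_ext
      intro S
      calc LinearMap.trace k (F.obj X)
            (S ∘ₗ (((F.map f).hom : F.obj X →ₗ[k] F.obj Y) ∘ₗ coendDualπ k C F U i X α))
          = LinearMap.trace k (F.obj X)
            ((S ∘ₗ ((F.map f).hom : F.obj X →ₗ[k] F.obj Y)) ∘ₗ coendDualπ k C F U i X α) := by
            rw [LinearMap.comp_assoc]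
        _ = α (i X (S ∘ₗ ((F.map f).hom : F.obj X →ₗ[k] F.obj Y))) := key X α _
        _ = α (i Y (((F.map f).hom : F.obj X →ₗ[k] F.obj Y) ∘ₗ S)) := by rw [hdin Y X f S]
        _ = LinearMap.trace k (F.obj Y)
            ((((F.map f).hom : F.obj X →ₗ[k] F.obj Y) ∘ₗ S) ∘ₗ coendDualπ k C F U i Y α) :=
            (key Y α _).symm
        _ = LinearMap.trace k (F.obj Y)
            (((F.map f).hom : F.obj X →ₗ[k] F.obj Y) ∘ₗ (S ∘ₗ coendDualπ k C F U i Y α)) := by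
            rw [LinearMap.comp_assoc]
        _ = LinearMap.trace k (F.obj X)
            ((S ∘ₗ coendDualπ k C F U i Y α) ∘ₗ ((F.map f).hom : F.obj X →ₗ[k] F.obj Y)) :=
            (LinearMap.trace_comp_comm' _ _).symm
        _ = LinearMap.trace k (F.obj X)
            (S ∘ₗ (coendDualπ k C F U i Y α ∘ₗ ((F.map f).hom : F.obj X →ₗ[k] F.obj Y))) := by
            rw [LinearMap.comp_assoc]
    · -- universal property
      intro V _ _ p hp
      let j : V → ∀ X : C, (F.obj X →ₗ[k] F.obj X) →ₗ[k] k := fun v X =>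
        (LinearMap.trace k (F.obj X)) ∘ₗ (LinearMap.lcomp k _ (p X v))
      have hj : ∀ v X S, j v X S = LinearMap.trace k (F.obj X) (S ∘ₗ p X v) := fun v X S => rfl
      have hjdin : ∀ v, DinatC k C F k (j v) := by
        intro v X Y f S
        haveI := hfd X; haveI := hfd Y
        show LinearMap.trace k (F.obj X) ((((F.map f).hom : F.obj Y →ₗ[k] F.obj X) ∘ₗ S) ∘ₗ p X v)
            = LinearMap.trace k (F.obj Y) ((S ∘ₗ ((F.map f).hom : F.obj Y →ₗ[k] F.obj X)) ∘ₗ p Y v)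
        have hpf := hp Y X f v
        calc LinearMap.trace k (F.obj X) ((((F.map f).hom : F.obj Y →ₗ[k] F.obj X) ∘ₗ S) ∘ₗ p X v)
            = LinearMap.trace k (F.obj X)
              (((F.map f).hom : F.obj Y →ₗ[k] F.obj X) ∘ₗ (S ∘ₗ p X v)) := by
              rw [LinearMap.comp_assoc]
          _ = LinearMap.trace k (F.obj Y)
              ((S ∘ₗ p X v) ∘ₗ ((F.map f).hom : F.obj Y →ₗ[k] F.obj X)) :=
              LinearMap.trace_comp_comm' _ _
          _ = LinearMap.trace k (F.obj Y)
              (S ∘ₗ (p X v ∘ₗ ((F.map f).hom : F.obj Y →ₗ[k] F.obj X))) := by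
              rw [LinearMap.comp_assoc]
          _ = LinearMap.trace k (F.obj Y)
              (S ∘ₗ (((F.map f).hom : F.obj Y →ₗ[k] F.obj X) ∘ₗ p Y v)) := by rw [hpf]
          _ = LinearMap.trace k (F.obj Y)
              ((S ∘ₗ ((F.map f).hom : F.obj Y →ₗ[k] F.obj X)) ∘ₗ p Y v) := by
              rw [LinearMap.comp_assoc]
      have hex : ∀ v : V, ∃! φ : U →ₗ[k] k, ∀ X : C, φ ∘ₗ i X = j v X :=
        fun v => huniv k (j v) (hjdin v)
      have hΦ0 : ∀ v X, ((hex v).choose) ∘ₗ i X = j v X := fun v => (hex v).choose_spec.1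
      have hΦu : ∀ v (ψ : U →ₗ[k] k), (∀ X, ψ ∘ₗ i X = j v X) → ψ = (hex v).choose :=
        fun v ψ h => (hex v).choose_spec.2 ψ h
      let Φ : V →ₗ[k] (U →ₗ[k] k) :=
        { toFun := fun v => (hex v).choose
          map_add' := fun v w => by
            refine (hΦu (v + w) ((hex v).choose + (hex w).choose ) ?_).symm
            intro X
            ext S
            have h1 := LinearMap.congr_fun (hΦ0 v X) S
            have h2 := LinearMap.congr_fun (hΦ0 w X) S
            simp only [LinearMap.comp_apply, LinearMap.add_apply] at h1 h2 ⊢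
            rw [h1, h2, hj, hj, hj, map_add, LinearMap.comp_add, map_add]
          map_smul' := fun c v => by
            refine (hΦu (c • v) (c • (hex v).choose) ?_).symm
            intro X
            ext S
            have h1 := LinearMap.congr_fun (hΦ0 v X) S
            simp only [LinearMap.comp_apply, LinearMap.smul_apply, RingHom.id_apply] at h1 ⊢
            rw [h1, hj, hj, map_smul, LinearMap.comp_smul, map_smul] }
      refine ⟨Φ, ?_, ?_⟩
      · intro X
        haveI := hfd X
        apply LinearMap.ext
        intro v
        show coendDualπ k C F U i X ((hex v).choose) = p X v
        apply Aux.trace_ext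
        intro S
        rw [key X _ S]
        have h1 := LinearMap.congr_fun (hΦ0 v X) S
        simp only [LinearMap.comp_apply] at h1
        rw [h1, hj]
      · intro φ' hφ'
        apply LinearMap.ext
        intro v
        refine hΦu v (φ' v) ?_
        intro X
        haveI := hfd X
        ext S
        have h2 : coendDualπ k C F U i X (φ' v) = p X v := LinearMap.congr_fun (hφ' X) v
        simp only [LinearMap.comp_apply]
        rw [← key X (φ' v) S, h2, hj]
  · -- algebra map
    intro X
    haveI := hfd X
    constructor
    · intro α β
      apply Aux.trace_ext
      intro S
      rw [key X (convMul k U Δ α β) S]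
      have hR : S ∘ₗ (coendDualπ k C F U i X α ∘ₗ coendDualπ k C F U i X β)
          = (S ∘ₗ coendDualπ k C F U i X α) ∘ₗ coendDualπ k C F U i X β := by
        rw [LinearMap.comp_assoc]
      rw [hR, key X β (S ∘ₗ coendDualπ k C F U i X α)]
      have hΔS := LinearMap.congr_fun (hΔ X) S
      simp only [LinearMap.comp_apply] at hΔS
      simp only [convMul, LinearMap.comp_apply, LinearEquiv.coe_coe]
      rw [hΔS, comatrixComul_apply k (F.obj X) S]
      set b := Module.Free.chooseBasis k ↥(F.obj X) with hb
      have h2 : S ∘ₗ coendDualπ k C F U i X α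
          = ∑ p, ∑ q, α (i X ((b.coord p).smulRight (b q))) •
              ((b.coord q).smulRight (S (b p))) := by
        rw [coendDualπ_apply k C F U i X α, ← hb]
        ext y
        simp
      rw [h2]
      have hα : ∀ r l, ((b.coord r ∘ₗ S).smulRight (b l))
          = ∑ q, (b.coord r) (S (b q)) • ((b.coord q).smulRight (b l)) := by
        intro r l
        simpa using Aux.smulRight_expand_left b (b.coord r ∘ₗ S) (b l)
      have hβ : ∀ q p, ((b.coord q).smulRight (S (b p)))
          = ∑ r, (b.coord r) (S (b p)) • ((b.coord q).smulRight (b r)) :=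
        fun q p => Aux.smulRight_expand b (b.coord q) (S (b p))
      simp only [hα, hβ, map_sum, map_smul, TensorProduct.map_tmul, TensorProduct.lid_tmul,
        smul_eq_mul]
      simp only [Finset.sum_mul, Finset.mul_sum]
      conv_lhs => rw [Finset.sum_comm]
      conv_lhs =>
        enter [2, l]
        rw [Finset.sum_comm]
      conv_lhs => rw [Finset.sum_comm]
      exact Finset.sum_congr rfl fun p _ => Finset.sum_congr rfl fun q _ =>
        Finset.sum_congr rfl fun r _ => by ring

    · apply Aux.trace_ext
      intro S
      rw [key X ε S]
      have h1 := LinearMap.congr_fun (hε X) S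
      simp only [LinearMap.comp_apply] at h1
      rw [h1, LinearMap.comp_id]
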